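/- Let P be a locally finite partially ordered set, F a field, G a group, and ν, μ : P → G. Let r be an invertible element (unit) of the incidence algebra I(P,F), and suppose the inner automorphism ψ_r : f ↦ r f r⁻¹ maps A^ν(g) into A^μ(g) for every g ∈ G. Then ν(x)⁻¹ν(y) = μ(x)⁻¹μ(y) for all x ≤ y in P. -/

import Mathlib

/-- `A^θ(g)`: the `F`-subspace of the incidence algebra `I(P,F)` consisting of the functions
`f` with `f x y = 0` whenever `x ≤ y` and `(θ x)⁻¹ * θ y ≠ g`. -/
def elemSubspace (F : Type*) [Field F] {α : Type*} [PartialOrder α] [LocallyFiniteOrder α]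
    {G : Type*} [Group G] (θ : α → G) (g : G) :
    Submodule F (IncidenceAlgebra F α) where
  carrier := {f | ∀ x y : α, x ≤ y → (θ x)⁻¹ * θ y ≠ g → f x y = 0}
  zero_mem' := by intro x y _ _; rfl
  add_mem' := by
    intro f₁ f₂ h₁ h₂ x y hxy hg
    show (f₁ + f₂) x y = 0
    rw [IncidenceAlgebra.add_apply, h₁ x y hxy hg, h₂ x y hxy hg, add_zero]
  smul_mem' := by
    intro c f hf x y hxy hg
    show (c • f) x y = 0
    rw [IncidenceAlgebra.constSMul_apply, hf x y hxy hg, smul_zero]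


open Finset

lemma unit_diag_mul {F α : Type*} [Field F] [PartialOrder α] [LocallyFiniteOrder α]
    [DecidableEq α] (r : (IncidenceAlgebra F α)ˣ) (a : α) :
    (r : IncidenceAlgebra F α) a a * (↑r⁻¹ : IncidenceAlgebra F α) a a = 1 := by
  have := congrArg (fun f : IncidenceAlgebra F α => f a a) r.mul_inv
  simpa only [IncidenceAlgebra.mul_apply, IncidenceAlgebra.one_apply, Icc_self,
    sum_singleton, if_pos rfl, ↓reduceIte] using this

lemma inv_unit_diag_mul {F α : Type*} [Field F] [PartialOrder α] [LocallyFiniteOrder α]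
    [DecidableEq α] (r : (IncidenceAlgebra F α)ˣ) (a : α) :
    (↑r⁻¹ : IncidenceAlgebra F α) a a * (r : IncidenceAlgebra F α) a a = 1 := by
  have := congrArg (fun f : IncidenceAlgebra F α => f a a) r.inv_mul
  simpa only [IncidenceAlgebra.mul_apply, IncidenceAlgebra.one_apply, Icc_self,
    sum_singleton, if_pos rfl, ↓reduceIte] using this

/-- if `r` is a unit of `I(P,F)` and the inner automorphism
`ψ_r : f ↦ r * f * r⁻¹` maps `A^ν(g)` into `A^μ(g)` for every `g ∈ G`, then
`ν(x)⁻¹ν(y) = μ(x)⁻¹μ(y)` for all `x ≤ y` in `P`. -/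
theorem inner_maps_elemSubspace {F α G : Type*} [Field F] [PartialOrder α]
    [LocallyFiniteOrder α] [DecidableEq α] [Group G] (ν μ : α → G)
    (r : (IncidenceAlgebra F α)ˣ)
    (h : ∀ g : G, ∀ f ∈ elemSubspace F ν g,
      (r : IncidenceAlgebra F α) * f * (↑r⁻¹ : IncidenceAlgebra F α) ∈ elemSubspace F μ g) :
    ∀ x y : α, x ≤ y → (ν x)⁻¹ * ν y = (μ x)⁻¹ * μ y := by
  intro x y hxy
  set g := (ν x)⁻¹ * ν y with hg
  let e : IncidenceAlgebra F α :=
    ⟨fun a b => if a = x ∧ b = y then 1 else 0, by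
      intro a b hab; rw [if_neg]; rintro ⟨rfl, rfl⟩; exact hab hxy⟩
  have he : e ∈ elemSubspace F ν g := by
    intro a b hab hgab
    show (if a = x ∧ b = y then (1:F) else 0) = 0
    rw [if_neg]; rintro ⟨rfl, rfl⟩; exact hgab rfl
  have hmem := h g e he
  by_contra hne
  have h0 := hmem x y hxy (fun hh => hne hh.symm)
  have key : ((r : IncidenceAlgebra F α) * e * (↑r⁻¹ : IncidenceAlgebra F α)) x y =
      (r : IncidenceAlgebra F α) x x * (↑r⁻¹ : IncidenceAlgebra F α) y y := by
    rw [IncidenceAlgebra.mul_apply]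
    have inner : ∀ z ∈ Icc x y, ((r : IncidenceAlgebra F α) * e) x z
        = if z = y then (r : IncidenceAlgebra F α) x x else 0 := by
      intro z hz
      rw [IncidenceAlgebra.mul_apply]
      show (∑ w ∈ Icc x z, (r : IncidenceAlgebra F α) x w *
        (if w = x ∧ z = y then (1:F) else 0)) = _
      simp only [mul_ite, mul_one, mul_zero, ite_and]
      rw [Finset.sum_ite_eq' (Icc x z) x]
      simp [mem_Icc, (mem_Icc.mp hz).1]
    rw [Finset.sum_congr rfl (fun z hz => by rw [inner z hz])]
    simp only [ite_mul, zero_mul]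
    rw [Finset.sum_ite_eq' (Icc x y) y]
    simp [mem_Icc, hxy]
  rw [key] at h0
  rcases mul_eq_zero.mp h0 with h1 | h1
  · have := unit_diag_mul r x; rw [h1, zero_mul] at this; exact zero_ne_one this
  · have := unit_diag_mul r y; rw [h1, mul_zero] at this; exact zero_ne_one this
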